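/- arXiv:1412.5888 — 4 statements merged into one kernel-verified Lean document; each statement's English description precedes it below -/
import Mathlib

section
/- The group G_B is nilpotent of nilpotency class at most 3: for all g₁, g₂, g₃, g₄ ∈ G_B the iterated commutator ⁅⁅⁅g₁,g₂⁆,g₃⁆,g₄⁆ equals the identity (0,0,0,0), where ⁅g,h⁆ = g·h·g⁻¹·h⁻¹. -/
/-- The multiplication of `G_B` on `ℝ × ℝ^r × ℝ × ℝ^r`, for a bilinear form `B` on `ℝ^r`. -/
noncomputable def gMul {r : ℕ} (B : (Fin r → ℝ) →ₗ[ℝ] (Fin r → ℝ) →ₗ[ℝ] ℝ)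
    (g g' : ℝ × (Fin r → ℝ) × ℝ × (Fin r → ℝ)) : ℝ × (Fin r → ℝ) × ℝ × (Fin r → ℝ) :=
  (g.1 + g'.1 + B g.2.2.2 g'.2.1 + B g.2.2.2 g.2.2.2 / 2 * g'.2.2.1,
    g.2.1 + g'.2.1 + g'.2.2.1 • g.2.2.2,
    g.2.2.1 + g'.2.2.1,
    g.2.2.2 + g'.2.2.2)

/-- The inversion of `G_B`: `(z,c,b,a)⁻¹ = (−z + B(a,c) − Q(a)b, −c + b·a, −b, −a)`. -/
noncomputable def gInv {r : ℕ} (B : (Fin r → ℝ) →ₗ[ℝ] (Fin r → ℝ) →ₗ[ℝ] ℝ)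
    (g : ℝ × (Fin r → ℝ) × ℝ × (Fin r → ℝ)) : ℝ × (Fin r → ℝ) × ℝ × (Fin r → ℝ) :=
  (-g.1 + B g.2.2.2 g.2.1 - B g.2.2.2 g.2.2.2 / 2 * g.2.2.1,
    -g.2.1 + g.2.2.1 • g.2.2.2,
    -g.2.2.1,
    -g.2.2.2)

/-- The commutator `⁅g,h⁆ = g·h·g⁻¹·h⁻¹` in `G_B`. -/
noncomputable def gComm {r : ℕ} (B : (Fin r → ℝ) →ₗ[ℝ] (Fin r → ℝ) →ₗ[ℝ] ℝ)
    (g h : ℝ × (Fin r → ℝ) × ℝ × (Fin r → ℝ)) : ℝ × (Fin r → ℝ) × ℝ × (Fin r → ℝ) :=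
  gMul B (gMul B (gMul B g h) (gInv B g)) (gInv B h)

lemma gComm_last {r : ℕ} (B : (Fin r → ℝ) →ₗ[ℝ] (Fin r → ℝ) →ₗ[ℝ] ℝ)
    (g h : ℝ × (Fin r → ℝ) × ℝ × (Fin r → ℝ)) :
    (gComm B g h).2.2 = (0, 0) := by
  obtain ⟨z,c,b,a⟩ := g; obtain ⟨z',c',b',a'⟩ := h
  simp only [gComm, gMul, gInv, Prod.mk.injEq]
  constructor
  · ring
  · abel

lemma gComm_central {r : ℕ} (B : (Fin r → ℝ) →ₗ[ℝ] (Fin r → ℝ) →ₗ[ℝ] ℝ)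
    (z : ℝ) (c : Fin r → ℝ) (h : ℝ × (Fin r → ℝ) × ℝ × (Fin r → ℝ)) :
    gComm B (z, c, 0, 0) h = (-(B h.2.2.2 c), 0, 0, 0) := by
  obtain ⟨z',c',b',a'⟩ := h
  simp only [gComm, gMul, gInv, Prod.mk.injEq, map_add, map_neg, map_smul, map_zero,
    LinearMap.add_apply, LinearMap.neg_apply, LinearMap.smul_apply, LinearMap.zero_apply,
    LinearMap.map_zero, smul_eq_mul, smul_zero, add_zero, neg_zero]
  refine ⟨by ring, by funext i; simp, by ring, by funext i; simp⟩

theorem stmt5 (r : ℕ) (hr : 1 ≤ r)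
    (B : (Fin r → ℝ) →ₗ[ℝ] (Fin r → ℝ) →ₗ[ℝ] ℝ)
    (hB : ∀ x y, B x y = B y x) :
    ∀ g₁ g₂ g₃ g₄ : ℝ × (Fin r → ℝ) × ℝ × (Fin r → ℝ),
      gComm B (gComm B (gComm B g₁ g₂) g₃) g₄ = (0, 0, 0, 0) := by
  intro g₁ g₂ g₃ g₄
  have h1 : gComm B g₁ g₂ = ((gComm B g₁ g₂).1, (gComm B g₁ g₂).2.1, 0, 0) := by
    have := gComm_last B g₁ g₂
    ext <;> simp [this]
  rw [h1, gComm_central, gComm_central]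
  simp
end

section
/- Assume δ ≠ 0 and that the Gram matrix of B with respect to the standard basis is invertible. Then the induced representation of G_B on L²(ℝ^r, ℂ) is irreducible: every closed ℂ-linear subspace V of L²(ℝ^r, ℂ) satisfying U_g(V) ⊆ V for all g ∈ G_B is either {0} or all of L²(ℝ^r, ℂ). -/
open MeasureTheory Matrix FourierTransform SchwartzMap
open scoped ContDiff ENNReal RealInnerProductSpace

noncomputable def mySchwartz {E : Type*} [NormedAddCommGroup E] [NormedSpace ℝ E]
    (g : E → ℂ) (hg : ContDiff ℝ ∞ g) (hsupp : HasCompactSupport g) : SchwartzMap E ℂ where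
  toFun := g
  smooth' := hg
  decay' := by
    intro k n
    have hcs : HasCompactSupport fun x => ‖x‖ ^ k * ‖iteratedFDeriv ℝ n g x‖ := by
      apply (hsupp.iteratedFDeriv n).norm.mul_left
    obtain ⟨C, hC⟩ := hcs.exists_bound_of_continuous <| by
      exact (continuous_norm.pow k).mul (hg.continuous_iteratedFDeriv (mod_cast le_top)).norm
    exact ⟨C, fun x => (le_abs_self _).trans (hC x)⟩

theorem fourier_test {V : Type*} [NormedAddCommGroup V] [InnerProductSpace ℝ V]
    [FiniteDimensional ℝ V] [MeasurableSpace V] [BorelSpace V]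
    (F : V → ℂ) (hF : Integrable F volume)
    (h0 : ∀ ξ : V, 𝓕 F ξ = 0) : ∀ᵐ x ∂(volume : Measure V), F x = 0 := by
  have hflip : (innerₗ V).flip = innerₗ V := by
    apply LinearMap.ext; intro x; apply LinearMap.ext; intro y
    exact real_inner_comm x y
  have key : ∀ φ : SchwartzMap V ℂ, ∫ x, F x • (φ : V → ℂ) x = 0 := by
    intro φ
    set ψ := (fourierCLE ℂ (E := SchwartzMap V ℂ)).symm φ with hψ
    have hφψ : 𝓕 (ψ : V → ℂ) = (φ : V → ℂ) := by
      have h2 := (fourierCLE ℂ (E := SchwartzMap V ℂ)).apply_symm_apply φ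
      have h3 := fourierTransformCLE_apply (R := ℂ) ψ
      rw [h2] at h3
      exact (congrArg (fun g : SchwartzMap V ℂ => (g : V → ℂ)) h3).symm
    have mult := VectorFourier.integral_fourierIntegral_smul_eq_flip
      (e := Real.fourierChar) (L := innerₗ V) (μ := (volume : Measure V))
      (ν := (volume : Measure V)) (f := F) (g := (ψ : V → ℂ))
      Real.continuous_fourierChar continuous_inner hF ψ.integrable
    rw [hflip] at mult
    have lhs0 : ∫ ξ, (VectorFourier.fourierIntegral Real.fourierChar volume (innerₗ V) F ξ) • (ψ : V → ℂ) ξ = 0 := by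
      have h4 : ∀ ξ, VectorFourier.fourierIntegral Real.fourierChar volume (innerₗ V) F ξ = 0 := h0
      simp [h4]
    rw [lhs0] at mult
    have h5 : (fun x => F x • VectorFourier.fourierIntegral Real.fourierChar volume (innerₗ V) (ψ : V → ℂ) x)
        = fun x => F x • (φ : V → ℂ) x := by
      ext x
      rw [show VectorFourier.fourierIntegral Real.fourierChar volume (innerₗ V) (ψ : V → ℂ) x = 𝓕 (ψ : V → ℂ) x from rfl, hφψ]
    rw [← h5, ← mult]
  apply ae_eq_zero_of_integral_contDiff_smul_eq_zero hF.locallyIntegrable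
  intro g hg hgsupp
  have hgC : ContDiff ℝ ∞ (fun x => (g x : ℂ)) := Complex.ofRealCLM.contDiff.comp hg
  have hgCs : HasCompactSupport (fun x => (g x : ℂ)) :=
    hgsupp.comp_left (g := Complex.ofReal) Complex.ofReal_zero
  have h6 := key (mySchwartz _ hgC hgCs)
  have hcoe : ((mySchwartz _ hgC hgCs : SchwartzMap V ℂ) : V → ℂ) = fun x => (g x : ℂ) := rfl
  rw [hcoe] at h6
  rw [← h6]
  congr 1; ext x
  simp [Complex.real_smul, mul_comm]

theorem stmt12 (r : ℕ) (hr : 1 ≤ r)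
    (M : Matrix (Fin r) (Fin r) ℝ) (hM : M.IsSymm) (hMdet : IsUnit M.det)
    (δ β : ℝ) (hδ : δ ≠ 0)
    (U : ℝ × (Fin r → ℝ) × ℝ × (Fin r → ℝ) → ((Fin r → ℝ) → ℂ) → ((Fin r → ℝ) → ℂ))
    (hU : ∀ g f x, U g f x =
      Complex.exp (2 * Real.pi * Complex.I *
        (δ * (g.1 + x ⬝ᵥ M.mulVec g.2.1 + (x ⬝ᵥ M.mulVec x) / 2 * g.2.2.1)
          + β * g.2.2.1 : ℝ)) *
        f (x + g.2.2.2))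
    (V : Submodule ℂ (Lp ℂ 2 (volume : Measure (Fin r → ℝ))))
    (hVclosed : IsClosed (V : Set (Lp ℂ 2 (volume : Measure (Fin r → ℝ)))))
    (hVinv : ∀ g : ℝ × (Fin r → ℝ) × ℝ × (Fin r → ℝ),
      ∀ f : Lp ℂ 2 (volume : Measure (Fin r → ℝ)), f ∈ V →
      ∀ h : Lp ℂ 2 (volume : Measure (Fin r → ℝ)),
        (h : (Fin r → ℝ) → ℂ) =ᵐ[volume] U g (f : (Fin r → ℝ) → ℂ) → h ∈ V) :
    V = ⊥ ∨ V = ⊤ := by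
  by_cases hbot : V = ⊥
  · exact Or.inl hbot
  right
  obtain ⟨f, hfV, hf0⟩ := Submodule.exists_mem_ne_zero_of_ne_bot hbot
  haveI : CompleteSpace V := hVclosed.completeSpace_coe
  rw [← Submodule.orthogonal_eq_bot_iff, Submodule.eq_bot_iff]
  intro h hh
  -- translates of f
  have hfa : ∀ a : Fin r → ℝ, MemLp (fun x => (f : (Fin r → ℝ) → ℂ) (x + a)) 2
      (volume : Measure (Fin r → ℝ)) := fun a =>
    (Lp.memLp f).comp_measurePreserving (measurePreserving_add_right volume a)
  -- Step A
  have stepA : ∀ c a : Fin r → ℝ,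
      ∫ x, (starRingEnd ℂ) (Complex.exp (2 * Real.pi * Complex.I *
          ((δ * (x ⬝ᵥ M.mulVec c) : ℝ) : ℂ)) * (f : (Fin r → ℝ) → ℂ) (x + a)) *
          (h : (Fin r → ℝ) → ℂ) x = 0 := by
    intro c a
    set w : (Fin r → ℝ) → ℂ := fun x => Complex.exp (2 * Real.pi * Complex.I *
        ((δ * (x ⬝ᵥ M.mulVec c) : ℝ) : ℂ)) * (f : (Fin r → ℝ) → ℂ) (x + a) with hwdef
    have hnorm : ∀ x, ‖w x‖ = ‖(f : (Fin r → ℝ) → ℂ) (x + a)‖ := by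
      intro x
      rw [hwdef]
      simp only [norm_mul, Complex.norm_exp]
      norm_num [Complex.mul_re, Complex.mul_im]
    have hdot : Continuous fun x : Fin r → ℝ => x ⬝ᵥ M.mulVec c := by
      show Continuous fun x : Fin r → ℝ => ∑ i, x i * M.mulVec c i
      exact continuous_finset_sum _ fun i _ => (continuous_apply i).mul continuous_const
    have hw : MemLp w 2 (volume : Measure (Fin r → ℝ)) := by
      have haesm : AEStronglyMeasurable w (volume : Measure (Fin r → ℝ)) := by
        apply AEStronglyMeasurable.mul ?_ (hfa a).1
        apply Continuous.aestronglyMeasurable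
        exact Complex.continuous_exp.comp
          (continuous_const.mul (Complex.continuous_ofReal.comp (continuous_const.mul hdot)))
      exact (hfa a).of_le haesm (Filter.Eventually.of_forall fun x => (hnorm x).le)
    have hwV : hw.toLp w ∈ V := by
      apply hVinv (0, c, 0, a) f hfV
      refine hw.coeFn_toLp.trans (Filter.Eventually.of_forall fun x => ?_)
      rw [hU (0, c, 0, a) (f : (Fin r → ℝ) → ℂ) x, hwdef]
      norm_num
    have horth : (inner ℂ (hw.toLp w) h : ℂ) = 0 := (Submodule.mem_orthogonal V h).1 hh _ hwV
    have hinner := MeasureTheory.L2.inner_def (𝕜 := ℂ) (hw.toLp w) h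
    rw [horth] at hinner
    have h7 : ∫ x, (inner ℂ ((hw.toLp w : Lp ℂ 2 (volume : Measure (Fin r → ℝ))) x)
        ((h : Lp ℂ 2 (volume : Measure (Fin r → ℝ))) x) : ℂ) =
        ∫ x, (starRingEnd ℂ) (w x) * (h : (Fin r → ℝ) → ℂ) x := by
      apply integral_congr_ae
      filter_upwards [hw.coeFn_toLp] with x hx
      rw [RCLike.inner_apply', hx]
    rw [h7] at hinner
    exact hinner.symm
  -- Step B
  have stepB : ∀ a : Fin r → ℝ, ∀ᵐ x ∂(volume : Measure (Fin r → ℝ)),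
      (starRingEnd ℂ) ((f : (Fin r → ℝ) → ℂ) (x + a)) * (h : (Fin r → ℝ) → ℂ) x = 0 := by
    intro a
    set Fa : (Fin r → ℝ) → ℂ := fun x =>
      (starRingEnd ℂ) ((f : (Fin r → ℝ) → ℂ) (x + a)) * (h : (Fin r → ℝ) → ℂ) x with hFadef
    have hFaInt : Integrable Fa (volume : Measure (Fin r → ℝ)) := by
      have h8 := MeasureTheory.L2.integrable_inner (𝕜 := ℂ) ((hfa a).toLp _) h
      apply h8.congr
      filter_upwards [(hfa a).coeFn_toLp] with x hx
      rw [RCLike.inner_apply', hx]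
    have hconj : ∀ t : ℝ, (starRingEnd ℂ) (Complex.exp (2 * Real.pi * Complex.I * (t : ℂ)))
        = Complex.exp (2 * Real.pi * Complex.I * ((-t : ℝ) : ℂ)) := by
      intro t
      rw [← Complex.exp_conj]
      congr 1
      simp only [_root_.map_mul, Complex.conj_I, Complex.conj_ofReal, map_ofNat]
      push_cast
      ring
    have hvanish : ∀ ξ : Fin r → ℝ,
        ∫ x, Complex.exp (2 * Real.pi * Complex.I * ((-(x ⬝ᵥ ξ) : ℝ) : ℂ)) * Fa x = 0 := by
      intro ξ
      have hMc : M.mulVec (δ⁻¹ • (M⁻¹.mulVec ξ)) = δ⁻¹ • ξ := by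
        rw [Matrix.mulVec_smul, Matrix.mulVec_mulVec, Matrix.mul_nonsing_inv _ hMdet,
          Matrix.one_mulVec]
      have hs : ∀ x : Fin r → ℝ, δ * (x ⬝ᵥ M.mulVec (δ⁻¹ • (M⁻¹.mulVec ξ))) = x ⬝ᵥ ξ := by
        intro x
        rw [hMc, dotProduct_smul, smul_eq_mul]
        field_simp
      have hc := stepA (δ⁻¹ • (M⁻¹.mulVec ξ)) a
      refine Eq.trans (integral_congr_ae (Filter.Eventually.of_forall fun x => ?_)) hc
      rw [_root_.map_mul, hconj (δ * (x ⬝ᵥ M.mulVec (δ⁻¹ • (M⁻¹.mulVec ξ)))), hs x]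
      simp only [hFadef]
      ring
    -- move to EuclideanSpace
    set e := (MeasurableEquiv.toLp 2 (Fin r → ℝ)).symm with he
    have hmp : MeasurePreserving e volume (volume : Measure (Fin r → ℝ)) :=
      EuclideanSpace.volume_preserving_symm_measurableEquiv_toLp (Fin r)
    set Fa' : EuclideanSpace ℝ (Fin r) → ℂ := fun v => Fa (e v) with hFa'def
    have hFa'int : Integrable Fa' volume :=
      (MeasurePreserving.integrable_comp_emb hmp e.measurableEmbedding).2 hFaInt
    have h0 : ∀ ξ' : EuclideanSpace ℝ (Fin r), 𝓕 Fa' ξ' = 0 := by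
      intro ξ'
      rw [Real.fourier_eq']
      have h2 : ∫ v, (fun x => Complex.exp (2 * Real.pi * Complex.I *
          ((-(x ⬝ᵥ e ξ') : ℝ) : ℂ)) * Fa x) (e v) = 0 :=
        (hmp.integral_comp e.measurableEmbedding _).trans (hvanish (e ξ'))
      rw [← h2]
      congr 1
      funext v
      have hip : (inner ℝ v ξ' : ℝ) = (e v) ⬝ᵥ (e ξ') := by
        simp [PiLp.inner_apply, dotProduct, RCLike.inner_apply, he,
          MeasurableEquiv.toLp_symm_apply, mul_comm]
      rw [smul_eq_mul, hip]
      congr 2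
      push_cast
      ring
    have hae := fourier_test Fa' hFa'int h0
    have hmp2 : MeasurePreserving e.symm (volume : Measure (Fin r → ℝ)) volume := hmp.symm e
    have hres := (hmp2.quasiMeasurePreserving.tendsto_ae).eventually hae
    filter_upwards [hres] with x hx
    have : Fa x = 0 := by rw [← e.apply_symm_apply x]; exact hx
    exact this
  -- Step C : Tonelli
  have hfSM : StronglyMeasurable ((f : Lp ℂ 2 (volume : Measure (Fin r → ℝ))) : (Fin r → ℝ) → ℂ) :=
    Lp.stronglyMeasurable f
  have hhSM : StronglyMeasurable ((h : Lp ℂ 2 (volume : Measure (Fin r → ℝ))) : (Fin r → ℝ) → ℂ) :=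
    Lp.stronglyMeasurable h
  set Φ : (Fin r → ℝ) → (Fin r → ℝ) → ℝ≥0∞ := fun a x =>
    (‖(f : (Fin r → ℝ) → ℂ) (x + a)‖₊ : ℝ≥0∞) * (‖(h : (Fin r → ℝ) → ℂ) x‖₊ : ℝ≥0∞) with hΦdef
  have hΦm : Measurable (Function.uncurry Φ) := by
    apply Measurable.mul (f := fun p : (Fin r → ℝ) × (Fin r → ℝ) => (‖(f : (Fin r → ℝ) → ℂ) (p.2 + p.1)‖₊ : ℝ≥0∞))
      (g := fun p : (Fin r → ℝ) × (Fin r → ℝ) => (‖(h : (Fin r → ℝ) → ℂ) p.2‖₊ : ℝ≥0∞))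
    · exact measurable_coe_nnreal_ennreal.comp
        ((hfSM.measurable.nnnorm).comp (measurable_snd.add measurable_fst))
    · exact measurable_coe_nnreal_ennreal.comp ((hhSM.measurable.nnnorm).comp measurable_snd)
  have hzero : ∀ a, ∫⁻ x, Φ a x = 0 := by
    intro a
    have h9 : ∀ᵐ x ∂(volume : Measure (Fin r → ℝ)), Φ a x = 0 := by
      filter_upwards [stepB a] with x hx
      have h10 : (‖(starRingEnd ℂ) ((f : (Fin r → ℝ) → ℂ) (x + a)) * (h : (Fin r → ℝ) → ℂ) x‖₊ : ℝ≥0∞) = 0 := by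
        rw [hx]; simp
      rw [hΦdef]
      simpa [nnnorm_mul, RCLike.nnnorm_conj, ENNReal.coe_mul] using h10
    rw [lintegral_congr_ae h9, lintegral_zero]
  have hswap := lintegral_lintegral_swap (μ := (volume : Measure (Fin r → ℝ)))
    (ν := (volume : Measure (Fin r → ℝ))) hΦm.aemeasurable
  simp only [hzero, lintegral_zero] at hswap
  -- hswap : 0 = ∫⁻ x, ∫⁻ a, Φ a x
  set If : ℝ≥0∞ := ∫⁻ y, (‖(f : (Fin r → ℝ) → ℂ) y‖₊ : ℝ≥0∞) with hIf
  have hinner2 : ∀ x, (∫⁻ a, Φ a x) = If * (‖(h : (Fin r → ℝ) → ℂ) x‖₊ : ℝ≥0∞) := by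
    intro x
    rw [hΦdef]
    rw [lintegral_mul_const' _ _ ENNReal.coe_ne_top]
    congr 1
    exact (measurePreserving_add_left volume x).lintegral_comp
      (measurable_coe_nnreal_ennreal.comp hfSM.measurable.nnnorm) |>.symm ▸ rfl
  have hfm : Measurable fun y => (‖(f : (Fin r → ℝ) → ℂ) y‖₊ : ℝ≥0∞) :=
    measurable_coe_nnreal_ennreal.comp hfSM.measurable.nnnorm
  have hhm : Measurable fun x => If * (‖(h : (Fin r → ℝ) → ℂ) x‖₊ : ℝ≥0∞) :=
    (measurable_coe_nnreal_ennreal.comp hhSM.measurable.nnnorm).const_mul If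
  have hswap2 : ∫⁻ x, If * (‖(h : (Fin r → ℝ) → ℂ) x‖₊ : ℝ≥0∞) = 0 := by
    rw [show (fun x => If * (‖(h : (Fin r → ℝ) → ℂ) x‖₊ : ℝ≥0∞)) = fun x => ∫⁻ a, Φ a x from
      funext fun x => (hinner2 x).symm]
    exact hswap.symm
  have hIf0 : If ≠ 0 := by
    intro h0
    apply hf0
    rw [Lp.eq_zero_iff_ae_eq_zero]
    have h11 := (lintegral_eq_zero_iff hfm).1 h0
    filter_upwards [h11] with y hy
    simpa using hy
  have h12 := (lintegral_eq_zero_iff hhm).1 hswap2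
  rw [Lp.eq_zero_iff_ae_eq_zero]
  filter_upwards [h12] with x hx
  rcases mul_eq_zero.1 hx with h13 | h13
  · exact absurd h13 hIf0
  · simpa using h13
end

section
/- Let x be a real number with 0 < x < 1. Then there exists an entire function F : ℂ → ℂ such that for every s ∈ ℂ with Re(s) > 1 the series Σ_{k∈ℤ} sign(k+x)·|k+x|^(−s) converges absolutely to F(s), and F(0) = 1 − 2x. -/
open Complex HurwitzZeta Set

noncomputable def Zfun (s : ℂ) : ℂ :=
  (s * completedRiemannZeta₀ (s + 1) - s / (s + 1) + 1) * (Gammaℝ (s + 1))⁻¹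

noncomputable def gterm (x : ℝ) (n : ℕ) (s : ℂ) : ℂ :=
  ((n + x : ℝ) : ℂ) ^ (-s) - ((n + 1 - x : ℝ) : ℂ) ^ (-s)
    - s * ((1 - 2 * x : ℝ) : ℂ) * ((n + 1 : ℝ) : ℂ) ^ (-s - 1)

lemma hasDerivAt_real_cpow_const {c : ℂ} (hc : c ≠ 0) {u : ℝ} (hu : u ≠ 0) :
    HasDerivAt (fun y : ℝ => (y : ℂ) ^ c) (c * (u : ℂ) ^ (c - 1)) u := by
  have hc1 : c - 1 ≠ -1 := by intro h; apply hc; linear_combination h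
  have h := (hasDerivAt_ofReal_cpow_const' hu hc1).const_mul c
  simp only [sub_add_cancel] at h
  have hfun : (fun y : ℝ => c * ((y : ℂ) ^ c / c)) = fun y : ℝ => (y : ℂ) ^ c := by
    funext y; rw [mul_div_cancel₀ _ hc]
  rwa [hfun] at h

lemma Zfun_zero : Zfun 0 = 1 := by
  simp [Zfun, Gammaℝ_one]

lemma Zfun_eq {s : ℂ} (hs : 1 < s.re) : Zfun s = s * riemannZeta (s + 1) := by
  have hs0 : s ≠ 0 := by
    intro h; rw [h] at hs; simp at hs; linarith
  have hs1 : s + 1 ≠ 0 := by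
    intro h
    have := congrArg Complex.re h
    simp [Complex.add_re] at this; linarith
  have hG : Gammaℝ (s + 1) ≠ 0 := by
    rw [Ne, Gammaℝ_eq_zero_iff]
    push_neg
    intro n h
    have := congrArg Complex.re h
    simp [Complex.add_re] at this
    nlinarith [Nat.cast_nonneg (α := ℝ) n]
  rw [riemannZeta_def_of_ne_zero hs1, completedRiemannZeta_eq, Zfun]
  have h1 : (1 : ℂ) - (s + 1) = -s := by ring
  rw [h1, div_eq_mul_inv]
  have h2 : s * (completedRiemannZeta₀ (s + 1) - 1 / (s + 1) - 1 / (-s)) =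
      s * completedRiemannZeta₀ (s + 1) - s / (s + 1) + 1 := by
    rw [one_div (-s), inv_neg, mul_sub, mul_sub, mul_one_div, mul_neg, mul_inv_cancel₀ hs0]
    ring
  linear_combination (Gammaℝ (s + 1))⁻¹ * h2 - 2 * (Gammaℝ (s + 1))⁻¹ * (mul_inv_cancel₀ hs0)

lemma gterm_bound (x : ℝ) (hx0 : 0 < x) (hx1 : x < 1) (n : ℕ) {s : ℂ}
    (hs : (-1/4 : ℝ) < s.re) :
    ‖gterm x n s‖ ≤ ‖s‖ * ‖s + 1‖ * ((n + min x (1 - x) : ℝ) ^ (-s.re - 2)) := by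
  set m : ℝ := min x (1 - x) with hm
  have hm0 : 0 < m := lt_min hx0 (by linarith)
  have hm1 : m ≤ 1 / 2 := by
    rcases le_total x (1 - x) with h | h
    · rw [hm, min_eq_left h]; linarith
    · rw [hm, min_eq_right h]; linarith
  set M : ℝ := (n : ℝ) + m with hM
  have hM0 : 0 < M := by positivity
  rcases eq_or_ne s 0 with rfl | hs0
  · simp [gterm]
  have hs1 : s + 1 ≠ 0 := by
    intro h
    have := congrArg Complex.re h
    simp [Complex.add_re] at this
    linarith
  set a : ℝ := (n : ℝ) + x with ha
  set b : ℝ := (n : ℝ) + 1 - x with hb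
  set c : ℝ := (n : ℝ) + 1 with hc
  have haM : M ≤ a := by have : m ≤ x := min_le_left _ _; simp [hM, ha]; linarith
  have hbM : M ≤ b := by have : m ≤ 1 - x := min_le_right _ _; simp [hM, hb]; linarith
  have hac : a ≤ c := by simp [ha, hc]; linarith
  have hbc : b ≤ c := by simp [hb, hc]; linarith
  have hMc : M ≤ c := by simp [hM, hc]; linarith
  have hexp2 : -s.re - 2 ≤ 0 := by linarith
  -- inner estimate
  have inner : ∀ u ∈ Icc M c, ‖(u : ℂ) ^ (-s - 1) - (c : ℂ) ^ (-s - 1)‖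
      ≤ ‖s + 1‖ * M ^ (-s.re - 2) := by
    intro u hu
    have hderiv : ∀ v ∈ Icc M c,
        HasDerivWithinAt (fun v : ℝ => (v : ℂ) ^ (-s - 1))
          ((-s - 1) * (v : ℂ) ^ (-s - 2)) (Icc M c) v := by
      intro v hv
      have hv0 : (0 : ℝ) < v := lt_of_lt_of_le hM0 hv.1
      have := hasDerivAt_real_cpow_const (c := -s - 1)
        (by intro h; apply hs1; linear_combination -h) (ne_of_gt hv0)
      have he : (-s - 1 - 1 : ℂ) = -s - 2 := by ring
      rw [he] at this
      exact this.hasDerivWithinAt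
    have hbound : ∀ v ∈ Icc M c, ‖(-s - 1) * (v : ℂ) ^ (-s - 2)‖
        ≤ ‖s + 1‖ * M ^ (-s.re - 2) := by
      intro v hv
      have hv0 : (0 : ℝ) < v := lt_of_lt_of_le hM0 hv.1
      rw [norm_mul]
      have h1 : ‖(-s - 1 : ℂ)‖ = ‖s + 1‖ := by
        rw [show (-s - 1 : ℂ) = -(s + 1) by ring, norm_neg]
      rw [h1]
      have h2 : ‖((v : ℝ) : ℂ) ^ (-s - 2 : ℂ)‖ = v ^ (-s.re - 2) := by
        rw [Complex.norm_cpow_eq_rpow_re_of_pos hv0]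
        norm_num
      rw [h2]
      exact mul_le_mul_of_nonneg_left
        (Real.rpow_le_rpow_of_nonpos hM0 hv.1 hexp2) (norm_nonneg _)
    have key := (convex_Icc M c).norm_image_sub_le_of_norm_hasDerivWithin_le
      hderiv hbound hu ⟨hMc, le_refl c⟩
    rw [norm_sub_rev]
    refine key.trans ?_
    have : ‖(c : ℝ) - u‖ ≤ 1 := by
      rw [Real.norm_eq_abs, _root_.abs_of_nonneg (by linarith [hu.2] : (0:ℝ) ≤ c - u)]
      have := hu.1
      simp only [hM, hc] at this ⊢
      linarith
    calc ‖s + 1‖ * M ^ (-s.re - 2) * ‖c - u‖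
        ≤ ‖s + 1‖ * M ^ (-s.re - 2) * 1 := by
          apply mul_le_mul_of_nonneg_left this (by positivity)
      _ = ‖s + 1‖ * M ^ (-s.re - 2) := mul_one _
  -- outer estimate
  set Φ : ℝ → ℂ := fun u => (u : ℂ) ^ (-s) + (s * (c : ℂ) ^ (-s - 1)) * (u : ℂ) with hΦdef
  have hK : uIcc a b ⊆ Icc M c := by
    exact (Set.ordConnected_Icc).uIcc_subset ⟨haM, hac⟩ ⟨hbM, hbc⟩
  have hΦderiv : ∀ u ∈ uIcc a b,
      HasDerivWithinAt Φ (-s * (u : ℂ) ^ (-s - 1) + s * (c : ℂ) ^ (-s - 1)) (uIcc a b) u := by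
    intro u hu
    have hu0 : (0 : ℝ) < u := lt_of_lt_of_le hM0 (hK hu).1
    have h1 := hasDerivAt_real_cpow_const (c := -s) (neg_ne_zero.mpr hs0) (ne_of_gt hu0)
    have he : (-s - 1 : ℂ) = -s - 1 := rfl
    have h2 : HasDerivAt (fun v : ℝ => (s * (c : ℂ) ^ (-s - 1)) * (v : ℂ))
        (s * (c : ℂ) ^ (-s - 1)) u := by
      simpa using (Complex.ofRealCLM.hasDerivAt (x := u)).const_mul (s * (c : ℂ) ^ (-s - 1))
    have := (h1.add h2)
    have heq : -s * (u : ℂ) ^ (-s - 1) + s * (c : ℂ) ^ (-s - 1)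
        = -s * (u : ℂ) ^ (-s - 1) + s * (c : ℂ) ^ (-s - 1) := rfl
    exact this.hasDerivWithinAt
  have hΦbound : ∀ u ∈ uIcc a b, ‖-s * (u : ℂ) ^ (-s - 1) + s * (c : ℂ) ^ (-s - 1)‖
      ≤ ‖s‖ * (‖s + 1‖ * M ^ (-s.re - 2)) := by
    intro u hu
    have h1 : -s * (u : ℂ) ^ (-s - 1) + s * (c : ℂ) ^ (-s - 1)
        = -s * ((u : ℂ) ^ (-s - 1) - (c : ℂ) ^ (-s - 1)) := by ring
    rw [h1, norm_mul, norm_neg]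
    exact mul_le_mul_of_nonneg_left (inner u (hK hu)) (norm_nonneg _)
  have key := (convex_uIcc a b).norm_image_sub_le_of_norm_hasDerivWithin_le
    hΦderiv hΦbound right_mem_uIcc left_mem_uIcc
  have hg : gterm x n s = Φ a - Φ b := by
    simp only [hΦdef, gterm, ha, hb, hc]
    push_cast
    ring
  have hab : ‖a - b‖ ≤ 1 := by
    rw [Real.norm_eq_abs, abs_le]
    constructor
    · simp only [ha, hb]; linarith
    · simp only [ha, hb]; linarith
  rw [hg]
  calc ‖Φ a - Φ b‖ ≤ ‖s‖ * (‖s + 1‖ * M ^ (-s.re - 2)) * ‖a - b‖ := key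
    _ ≤ ‖s‖ * (‖s + 1‖ * M ^ (-s.re - 2)) * 1 :=
        mul_le_mul_of_nonneg_left hab (by positivity)
    _ = ‖s‖ * ‖s + 1‖ * M ^ (-s.re - 2) := by ring

lemma gterm_zero (x : ℝ) (n : ℕ) : gterm x n 0 = 0 := by
  simp [gterm]

lemma gterm_diff (x : ℝ) (hx0 : 0 < x) (hx1 : x < 1) (n : ℕ) :
    Differentiable ℂ (gterm x n) := by
  have h1 : ((n + x : ℝ) : ℂ) ≠ 0 := Complex.ofReal_ne_zero.mpr (by positivity)
  have h2 : ((n + 1 - x : ℝ) : ℂ) ≠ 0 := Complex.ofReal_ne_zero.mpr (by nlinarith [Nat.cast_nonneg (α := ℝ) n])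
  have h3 : ((n + 1 : ℝ) : ℂ) ≠ 0 := Complex.ofReal_ne_zero.mpr (by positivity)
  refine ((differentiable_neg.const_cpow (Or.inl h1)).sub
    (differentiable_neg.const_cpow (Or.inl h2))).sub
    ((differentiable_id.mul_const _).mul
      ((differentiable_neg.sub_const 1).const_cpow (Or.inl h3)))

lemma tsum_gterm_diffOn (x : ℝ) (hx0 : 0 < x) (hx1 : x < 1) :
    DifferentiableOn ℂ (fun s => ∑' n : ℕ, gterm x n s) {s : ℂ | (-1/4 : ℝ) < s.re} := by
  intro z hz
  have hm0 : 0 < min x (1 - x) := lt_min hx0 (by linarith)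
  have hm1 : min x (1 - x) < 1 := lt_of_le_of_lt (min_le_left _ _) hx1
  set R : ℝ := ‖z‖ + 1 with hR
  have hR1 : 1 ≤ R := by rw [hR]; linarith [norm_nonneg z]
  set V : Set ℂ := {s : ℂ | (-1/4 : ℝ) < s.re} ∩ Metric.ball 0 R with hV
  have hVopen : IsOpen V := (isOpen_lt continuous_const Complex.continuous_re).inter
    Metric.isOpen_ball
  have hu : Summable (fun n : ℕ =>
      (R * (R + 1) * ((min x (1 - x)) ^ (-R - 2) + 1)) *
        (1 / |(n : ℝ) + min x (1 - x)| ^ (7/4 : ℝ))) :=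
    ((Real.summable_one_div_nat_add_rpow _ (7/4)).mpr (by norm_num)).mul_left _
  have hbound : ∀ (n : ℕ) (w : ℂ), w ∈ V → ‖gterm x n w‖ ≤
      (R * (R + 1) * ((min x (1 - x)) ^ (-R - 2) + 1)) *
        (1 / |(n : ℝ) + min x (1 - x)| ^ (7/4 : ℝ)) := by
    intro n w hw
    obtain ⟨hw1, hw2⟩ := hw
    rw [Metric.mem_ball, dist_zero_right] at hw2
    have hw1' : (-1/4 : ℝ) < w.re := hw1
    have hM0 : (0 : ℝ) < (n : ℝ) + min x (1 - x) := by positivity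
    have hcase : ((n : ℝ) + min x (1 - x)) ^ (-w.re - 2) ≤
        ((min x (1 - x)) ^ (-R - 2) + 1) * ((n : ℝ) + min x (1 - x)) ^ (-(7/4 : ℝ)) := by
      have hre : w.re < R := lt_of_le_of_lt (le_trans (le_abs_self _)
        (Complex.abs_re_le_norm w)) hw2
      rcases le_or_gt 1 ((n : ℝ) + min x (1 - x)) with hM1 | hM1
      · have step1 : ((n : ℝ) + min x (1 - x)) ^ (-w.re - 2) ≤
            ((n : ℝ) + min x (1 - x)) ^ (-(7/4 : ℝ)) :=
          Real.rpow_le_rpow_of_exponent_le hM1 (by linarith)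
        have h1 : (1 : ℝ) ≤ (min x (1 - x)) ^ (-R - 2) + 1 :=
          le_add_of_nonneg_left (Real.rpow_nonneg hm0.le _)
        nlinarith [Real.rpow_nonneg hM0.le (-(7/4 : ℝ))]
      · have step1 : ((n : ℝ) + min x (1 - x)) ^ (-w.re - 2) ≤
            ((n : ℝ) + min x (1 - x)) ^ (-R - 2) :=
          Real.rpow_le_rpow_of_exponent_ge hM0 hM1.le (by linarith)
        have step2 : ((n : ℝ) + min x (1 - x)) ^ (-R - 2) ≤ (min x (1 - x)) ^ (-R - 2) :=
          Real.rpow_le_rpow_of_nonpos hm0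
            (by linarith [Nat.cast_nonneg (α := ℝ) n]) (by linarith)
        have step3 : (1 : ℝ) ≤ ((n : ℝ) + min x (1 - x)) ^ (-(7/4 : ℝ)) :=
          Real.one_le_rpow_of_pos_of_le_one_of_nonpos hM0 hM1.le (by norm_num)
        nlinarith [Real.rpow_nonneg hm0.le (-R - 2)]
    have key := gterm_bound x hx0 hx1 n hw1'
    refine key.trans ?_
    have hnorm1 : ‖w‖ ≤ R := hw2.le
    have hnorm2 : ‖w + 1‖ ≤ R + 1 := le_trans (norm_add_le _ _) (by rw [norm_one]; linarith)
    have hrw : (R * (R + 1) * ((min x (1 - x)) ^ (-R - 2) + 1)) *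
        (1 / |(n : ℝ) + min x (1 - x)| ^ (7/4 : ℝ)) =
        R * (R + 1) * (((min x (1 - x)) ^ (-R - 2) + 1) *
          ((n : ℝ) + min x (1 - x)) ^ (-(7/4 : ℝ))) := by
      rw [_root_.abs_of_pos hM0, one_div, ← Real.rpow_neg hM0.le]
      ring
    rw [hrw]
    have h1 : ‖w‖ * ‖w + 1‖ * ((n : ℝ) + min x (1 - x)) ^ (-w.re - 2) ≤
        R * (R + 1) * ((n : ℝ) + min x (1 - x)) ^ (-w.re - 2) := by
      have := mul_le_mul hnorm1 hnorm2 (norm_nonneg _) (by linarith)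
      exact mul_le_mul_of_nonneg_right this (Real.rpow_nonneg hM0.le _)
    refine h1.trans ?_
    exact mul_le_mul_of_nonneg_left hcase (by nlinarith)
  have hdiff := differentiableOn_tsum_of_summable_norm hu
    (fun n => (gterm_diff x hx0 hx1 n).differentiableOn) hVopen hbound
  have hzV : z ∈ V := ⟨hz, by rw [Metric.mem_ball, dist_zero_right, hR]; linarith⟩
  exact (hdiff.differentiableAt (hVopen.mem_nhds hzV)).differentiableWithinAt

lemma hasSum_gterm (x : ℝ) (hx0 : 0 < x) (hx1 : x < 1) {s : ℂ} (hs : 1 < s.re) :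
    HasSum (fun n : ℕ => gterm x n s)
      (2 * hurwitzZetaOdd x s - s * ((1 - 2 * x : ℝ) : ℂ) * riemannZeta (s + 1)) := by
  have h1 := (hasSum_nat_hurwitzZetaOdd_of_mem_Icc (a := x) ⟨hx0.le, hx1.le⟩ hs).mul_left 2
  have h1' : HasSum (fun n : ℕ => ((n + x : ℝ) : ℂ) ^ (-s) - ((n + 1 - x : ℝ) : ℂ) ^ (-s))
      (2 * hurwitzZetaOdd x s) := by
    refine h1.congr_fun fun n => ?_
    push_cast [cpow_neg]
    ring
  have hre : 1 < (s + 1).re := by rw [Complex.add_re, Complex.one_re]; linarith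
  have h2 : Summable (fun n : ℕ => 1 / ((n : ℂ) + 1) ^ (s + 1)) := by
    have h0 := Complex.summable_one_div_nat_cpow.mpr hre
    have h := (summable_nat_add_iff (f := fun n : ℕ => 1 / (n : ℂ) ^ (s + 1)) 1).mpr h0
    refine h.congr fun n => ?_
    push_cast
    ring_nf
  have h2' : HasSum (fun n : ℕ => 1 / ((n : ℂ) + 1) ^ (s + 1)) (riemannZeta (s + 1)) := by
    rw [zeta_eq_tsum_one_div_nat_add_one_cpow hre]
    exact h2.hasSum
  have h3 := h2'.mul_left (s * ((1 - 2 * x : ℝ) : ℂ))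
  have h3' : HasSum (fun n : ℕ => s * ((1 - 2 * x : ℝ) : ℂ) * ((n + 1 : ℝ) : ℂ) ^ (-s - 1))
      (s * ((1 - 2 * x : ℝ) : ℂ) * riemannZeta (s + 1)) := by
    refine h3.congr_fun fun n => ?_
    have : ((-s - 1) : ℂ) = -(s + 1) := by ring
    rw [this, cpow_neg]
    push_cast
    ring
  exact (h1'.sub h3')

lemma two_hzo_zero (x : ℝ) (hx0 : 0 < x) (hx1 : x < 1) :
    2 * hurwitzZetaOdd x 0 = ((1 - 2 * x : ℝ) : ℂ) := by
  set U : Set ℂ := {s : ℂ | (-1/4 : ℝ) < s.re} with hU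
  have hUopen : IsOpen U := isOpen_lt continuous_const Complex.continuous_re
  have hUconn : IsPreconnected U := (convex_halfSpace_re_gt _).isPreconnected
  set E : ℂ → ℂ := fun s => (∑' n : ℕ, gterm x n s) + ((1 - 2 * x : ℝ) : ℂ) * Zfun s with hE
  set D : ℂ → ℂ := fun s => 2 * hurwitzZetaOdd x s with hD
  have hDdiff : Differentiable ℂ D := (differentiable_hurwitzZetaOdd x).const_mul 2
  have hDan : AnalyticOnNhd ℂ D U := hDdiff.differentiableOn.analyticOnNhd hUopen
  have hEdiff : DifferentiableOn ℂ E U := by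
    refine (tsum_gterm_diffOn x hx0 hx1).add (DifferentiableOn.const_mul ?_ _)
    refine DifferentiableOn.mul ?_
      ((differentiable_Gammaℝ_inv.comp (differentiable_id.add_const 1)).differentiableOn)
    refine DifferentiableOn.add ?_ (differentiableOn_const 1)
    refine DifferentiableOn.sub
      ((differentiable_id.mul (differentiable_completedZeta₀.comp
        (differentiable_id.add_const 1))).differentiableOn) ?_
    refine DifferentiableOn.div differentiable_id.differentiableOn
      ((differentiable_id.add_const 1).differentiableOn) ?_
    intro z hz
    intro h
    have := congrArg Complex.re h
    simp only [Complex.add_re, Complex.one_re, Complex.zero_re] at this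
    have hz' : (-1/4 : ℝ) < z.re := hz
    linarith
  have hEan : AnalyticOnNhd ℂ E U := hEdiff.analyticOnNhd hUopen
  have h2U : (2 : ℂ) ∈ U := by
    show (-1/4 : ℝ) < (2 : ℂ).re
    norm_num
  have hmem : {s : ℂ | 1 < s.re} ∈ nhds (2 : ℂ) :=
    (isOpen_lt continuous_const Complex.continuous_re).mem_nhds (by norm_num)
  have hEv : E =ᶠ[nhds (2 : ℂ)] D := by
    refine Filter.eventuallyEq_of_mem hmem fun s hs => ?_
    have hs' : 1 < s.re := hs
    show (∑' n : ℕ, gterm x n s) + ((1 - 2 * x : ℝ) : ℂ) * Zfun s = 2 * hurwitzZetaOdd x s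
    rw [(hasSum_gterm x hx0 hx1 hs').tsum_eq, Zfun_eq hs']
    ring
  have heq := hEan.eqOn_of_preconnected_of_eventuallyEq hDan hUconn h2U hEv
  have h0U : (0 : ℂ) ∈ U := by
    show (-1/4 : ℝ) < (0 : ℂ).re
    norm_num
  have h0 := (heq h0U).symm
  show D 0 = _
  rw [h0]
  show (∑' n : ℕ, gterm x n 0) + ((1 - 2 * x : ℝ) : ℂ) * Zfun 0 = _
  rw [Zfun_zero]
  have : (fun n : ℕ => gterm x n 0) = fun _ => (0 : ℂ) := funext fun n => gterm_zero x n
  rw [this, tsum_zero, zero_add, mul_one]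

theorem stmt14 (x : ℝ) (hx0 : 0 < x) (hx1 : x < 1) :
    ∃ F : ℂ → ℂ, Differentiable ℂ F ∧
      (∀ s : ℂ, 1 < s.re →
        Summable (fun k : ℤ =>
          ‖((Real.sign ((k : ℝ) + x) : ℝ) : ℂ) *
            Complex.exp (-s * (Real.log |(k : ℝ) + x| : ℝ))‖) ∧
        HasSum (fun k : ℤ =>
          ((Real.sign ((k : ℝ) + x) : ℝ) : ℂ) *
            Complex.exp (-s * (Real.log |(k : ℝ) + x| : ℝ))) (F s)) ∧
      F 0 = ((1 - 2 * x : ℝ) : ℂ) := by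
  have hne : ∀ k : ℤ, (k : ℝ) + x ≠ 0 := by
    intro k
    rcases le_or_gt 0 k with h | h
    · have : (0 : ℝ) ≤ (k : ℝ) := Int.cast_nonneg_iff.mpr h
      positivity
    · have hk1 : k ≤ -1 := by omega
      have : (k : ℝ) ≤ -1 := by exact_mod_cast hk1
      intro hc
      linarith
  have habs : ∀ k : ℤ, (0 : ℝ) < |(k : ℝ) + x| := fun k => abs_pos.mpr (hne k)
  have hterm : ∀ (s : ℂ) (k : ℤ),
      ((Real.sign ((k : ℝ) + x) : ℝ) : ℂ) * Complex.exp (-s * (Real.log |(k : ℝ) + x| : ℝ)) =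
        2 * ((SignType.sign ((k : ℝ) + x) : ℂ) / ((|(k : ℝ) + x| : ℝ) : ℂ) ^ s / 2) := by
    intro s k
    set t : ℝ := (k : ℝ) + x with ht
    have ht0 : t ≠ 0 := hne k
    have hsign : ((Real.sign t : ℝ) : ℂ) = (SignType.sign t : ℂ) := by
      rcases lt_or_gt_of_ne ht0 with h | h
      · rw [Real.sign_of_neg h, _root_.sign_neg h]; simp
      · rw [Real.sign_of_pos h, _root_.sign_pos h]; simp
    rw [show (2 : ℂ) * ((SignType.sign t : ℂ) / ((|t| : ℝ) : ℂ) ^ s / 2) =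
      (SignType.sign t : ℂ) / ((|t| : ℝ) : ℂ) ^ s from by ring, hsign]
    rw [cpow_def_of_ne_zero (Complex.ofReal_ne_zero.mpr (ne_of_gt (habs k))),
      ← Complex.ofReal_log (abs_nonneg t), div_eq_mul_inv, ← Complex.exp_neg]
    congr 1
    ring
  have hnorm : ∀ (s : ℂ) (k : ℤ),
      ‖((Real.sign ((k : ℝ) + x) : ℝ) : ℂ) *
        Complex.exp (-s * (Real.log |(k : ℝ) + x| : ℝ))‖ = |(k : ℝ) + x| ^ (-s.re) := by
    intro s k
    set t : ℝ := (k : ℝ) + x with ht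
    have ht0 : t ≠ 0 := hne k
    rw [norm_mul, Complex.norm_real]
    have h1 : ‖Real.sign t‖ = 1 := by
      rcases lt_or_gt_of_ne ht0 with h | h
      · rw [Real.sign_of_neg h]; norm_num
      · rw [Real.sign_of_pos h]; norm_num
    rw [h1, one_mul, Complex.norm_exp]
    have h2 : (-s * (Real.log |t| : ℂ)).re = Real.log |t| * (-s.re) := by
      simp [Complex.mul_re]
      ring
    rw [h2, ← Real.rpow_def_of_pos (habs k)]
  refine ⟨fun s => 2 * hurwitzZetaOdd (x : UnitAddCircle) s,
    (differentiable_hurwitzZetaOdd x).const_mul 2, fun s hs => ⟨?_, ?_⟩, ?_⟩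
  · have hsum : Summable (fun k : ℤ => |(k : ℝ) + x| ^ (-s.re)) := by
      have := (Real.summable_one_div_int_add_rpow x s.re).mpr hs
      refine this.congr fun k => ?_
      rw [Real.rpow_neg (abs_nonneg _), one_div]
    refine hsum.congr fun k => (hnorm s k).symm
  · have h := (hasSum_int_hurwitzZetaOdd x hs).mul_left 2
    exact h.congr_fun fun k => hterm s k
  · exact two_hzo_zero x hx0 hx1
end

section
/- Let M be a 2×2 symmetric positive definite integer matrix with both diagonal entries even, and let D = det M. Then there exists a rational number α' with 12·α' ∈ ℤ such that for every integer d ≥ 1 and every finite set K ⊆ ℤ² containing exactly one element of each coset of the subgroup dMℤ² = {dMk : k ∈ ℤ²} in ℤ², the rational number Σ_{k∈K} (1/(2d))·kᵀM⁻¹k − α'·d³ − (D/4)·d is an integer. -/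
open Matrix
open scoped BigOperators

private lemma aux_mod3 : ∀ A B C G R E : ZMod 3, G*R = 4*A*C - B^2 →
    2*E*C*(E*G-1)*(2*E*G-1) + 2*E*A*(E*R-1)*(2*E*R-1) - 3*E*B*(E*G-1)*(E*R-1)
      - E^3*(2*C*(G-1)*(2*G-1) + 2*A*(R-1)*(2*R-1) - 3*B*(G-1)*(R-1) - 3*G*R) - 3*G*R*E = 0 := by
  decide

private lemma aux_mod4 : ∀ A B C G R E : ZMod 4, G*R = 4*A*C - B^2 →
    2*E*C*(E*G-1)*(2*E*G-1) + 2*E*A*(E*R-1)*(2*E*R-1) - 3*E*B*(E*G-1)*(E*R-1)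
      - E^3*(2*C*(G-1)*(2*G-1) + 2*A*(R-1)*(2*R-1) - 3*B*(G-1)*(R-1) - 3*G*R) - 3*G*R*E = 0 := by
  decide

private lemma sum_quad (n : ℕ) (A B C : ℚ) :
    ∑ j ∈ Finset.range n, (A + B*j + C*(j:ℚ)^2)
      = n*A + B*(n*(n-1)/2) + C*(n*(n-1)*(2*n-1)/6) := by
  induction n with
  | zero => simp
  | succ m ih => rw [Finset.sum_range_succ, ih]; push_cast; ring

private lemma lem_hMH (M : Matrix (Fin 2) (Fin 2) ℤ) (a b c g r q a' b' x y d : ℤ)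
    (ha' : M 0 0 = 2*a) (hc' : M 1 1 = 2*c) (hbb : M 0 1 = b) (hb' : M 1 0 = b)
    (ha2 : 2*a = g*a') (hb2 : b = g*b') (hBez : g = 2*a*x + b*y)
    (hq : q = b*x + 2*c*y)
    (key1 : q*a' - r*y = b) (key2 : q*b' + r*x = 2*c) (key3 : 2*c*a' - b*b' = r) :
    ∀ z : Fin 2 → ℤ, (∃ u : Fin 2 → ℤ, z = d • M.mulVec u) ↔
      (∃ w : ℤ × ℤ, z 0 = d*(g*w.1) ∧ z 1 = d*(q*w.1 + r*w.2)) := by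
  have hmv : ∀ u : Fin 2 → ℤ, ∀ i, (d • M.mulVec u) i = d * (M i 0 * u 0 + M i 1 * u 1) := by
    intro u i
    simp only [Pi.smul_apply, Matrix.mulVec, dotProduct, Fin.sum_univ_two, smul_eq_mul]
  intro z
  constructor
  · rintro ⟨u, hu⟩
    refine ⟨(a'*u 0 + b'*u 1, -y*u 0 + x*u 1), ?_, ?_⟩
    · have h0 := congrFun hu 0
      rw [hmv, ha', hbb] at h0
      rw [h0]
      linear_combination d*(u 0)*ha2 + d*(u 1)*hb2
    · have h1 := congrFun hu 1
      rw [hmv, hb', hc'] at h1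
      rw [h1]
      linear_combination d*(u 0)*(-key1) + d*(u 1)*(-key2)
  · rintro ⟨w, hw0, hw1⟩
    set u : Fin 2 → ℤ := ![x*w.1 - b'*w.2, y*w.1 + a'*w.2] with hu
    have hu0 : u 0 = x*w.1 - b'*w.2 := rfl
    have hu1 : u 1 = y*w.1 + a'*w.2 := rfl
    refine ⟨u, ?_⟩
    have h0 : z 0 = (d • M.mulVec u) 0 := by
      rw [hmv, ha', hbb, hu0, hu1, hw0]
      linear_combination d*w.1*hBez + d*w.2*(b'*ha2 - a'*hb2)
    have h1 : z 1 = (d • M.mulVec u) 1 := by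
      rw [hmv, hb', hc', hu0, hu1, hw1]
      linear_combination d*w.1*hq + (-(d*w.2))*key3
    funext i
    fin_cases i
    · exact h0
    · exact h1

private lemma lem_hK0 (M : Matrix (Fin 2) (Fin 2) ℤ) (g r q d : ℤ)
    (hgpos : 0 < g) (hrpos : 0 < r) (hd : 1 ≤ d)
    (hMH : ∀ z : Fin 2 → ℤ, (∃ u : Fin 2 → ℤ, z = d • M.mulVec u) ↔
      (∃ w : ℤ × ℤ, z 0 = d*(g*w.1) ∧ z 1 = d*(q*w.1 + r*w.2))) :
    ∀ v : Fin 2 → ℤ, ∃! k, k ∈ (Finset.range ((d*g).toNat) ×ˢ Finset.range ((d*r).toNat)).image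
        (fun p => ![(p.1 : ℤ), (p.2 : ℤ)]) ∧ ∃ u : Fin 2 → ℤ, v - k = d • M.mulVec u := by
  have hdgpos : 0 < d*g := by positivity
  have hdrpos : 0 < d*r := by positivity
  set P : ℕ := (d*g).toNat with hP
  set R : ℕ := (d*r).toNat with hR
  have hPc : (P : ℤ) = d*g := Int.toNat_of_nonneg hdgpos.le
  have hRc : (R : ℤ) = d*r := Int.toNat_of_nonneg hdrpos.le
  set K₀ : Finset (Fin 2 → ℤ) :=
    (Finset.range P ×ˢ Finset.range R).image (fun p => ![(p.1 : ℤ), (p.2 : ℤ)]) with hK₀def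
  have hmemK₀ : ∀ k, k ∈ K₀ ↔ (0 ≤ k 0 ∧ k 0 < d*g ∧ 0 ≤ k 1 ∧ k 1 < d*r ∧ k = ![k 0, k 1]) := by
    intro k
    constructor
    · intro hk
      obtain ⟨p, hp, hpk⟩ := Finset.mem_image.mp hk
      obtain ⟨hp1, hp2⟩ := Finset.mem_product.mp hp
      have h0 : k 0 = (p.1 : ℤ) := by rw [← hpk]; rfl
      have h1 : k 1 = (p.2 : ℤ) := by rw [← hpk]; rfl
      refine ⟨by omega, ?_, by omega, ?_, ?_⟩
      · rw [h0, ← hPc]; exact_mod_cast Finset.mem_range.mp hp1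
      · rw [h1, ← hRc]; exact_mod_cast Finset.mem_range.mp hp2
      · rw [← hpk]
        funext i; fin_cases i <;> rfl
    · rintro ⟨h0, h1, h2, h3, h4⟩
      apply Finset.mem_image.mpr
      refine ⟨((k 0).toNat, (k 1).toNat), Finset.mem_product.mpr ⟨?_, ?_⟩, ?_⟩
      · exact Finset.mem_range.mpr (by omega)
      · exact Finset.mem_range.mpr (by omega)
      · have c0 : (((k 0).toNat : ℕ) : ℤ) = k 0 := by omega
        have c1 : (((k 1).toNat : ℕ) : ℤ) = k 1 := by omega
        show ![(((k 0).toNat : ℕ) : ℤ), (((k 1).toNat : ℕ) : ℤ)] = k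
        rw [c0, c1]; exact h4.symm
  intro v
  set w0 : ℤ := v 0 / (d*g) with hw0
  set i : ℤ := v 0 % (d*g) with hi
  set w1 : ℤ := (v 1 - d*(q*w0)) / (d*r) with hw1
  set j : ℤ := (v 1 - d*(q*w0)) % (d*r) with hj
  have hiv : v 0 = d*g*w0 + i := by rw [hi, hw0]; exact (Int.mul_ediv_add_emod _ _).symm
  have hjv : v 1 - d*(q*w0) = d*r*w1 + j := by rw [hj, hw1]; exact (Int.mul_ediv_add_emod _ _).symm
  have hi0 : 0 ≤ i := Int.emod_nonneg _ (ne_of_gt hdgpos)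
  have hi1 : i < d*g := Int.emod_lt_of_pos _ hdgpos
  have hj0 : 0 ≤ j := Int.emod_nonneg _ (ne_of_gt hdrpos)
  have hj1 : j < d*r := Int.emod_lt_of_pos _ hdrpos
  refine ⟨![i, j], ⟨?_, ?_⟩, ?_⟩
  · apply (hmemK₀ _).mpr
    refine ⟨hi0, hi1, hj0, hj1, rfl⟩
  · apply (hMH _).mpr
    refine ⟨(w0, w1), ?_, ?_⟩
    · show v 0 - i = d*(g*w0)
      linear_combination hiv
    · show v 1 - j = d*(q*w0 + r*w1)
      linear_combination hjv
  · rintro k ⟨hkmem, hkrel⟩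
    obtain ⟨hk0, hk1, hk2, hk3, hk4⟩ := (hmemK₀ k).mp hkmem
    obtain ⟨w, hwa, hwb⟩ := (hMH _).mp hkrel
    have e0 : v 0 - k 0 = d*(g*w.1) := hwa
    have e1 : v 1 - k 1 = d*(q*w.1 + r*w.2) := hwb
    have cancel : ∀ (n s t : ℤ), 0 ≤ s → s < n → 0 ≤ t → t < n → n ∣ (s - t) → s = t := by
      intro n s t hs1 hs2 ht1 ht2 hdvd
      have h := Int.emod_eq_emod_iff_emod_sub_eq_zero.mpr (Int.emod_eq_zero_of_dvd hdvd)
      rwa [Int.emod_eq_of_lt hs1 hs2, Int.emod_eq_of_lt ht1 ht2] at h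
    have hk0i : k 0 = i := by
      apply cancel (d*g) _ _ hk0 hk1 hi0 hi1
      exact ⟨w0 - w.1, by linear_combination hiv - e0⟩
    have hww : w.1 = w0 := by
      have h2 : d*g*(w0 - w.1) = 0 := by linear_combination e0 - hiv + hk0i
      rcases mul_eq_zero.mp h2 with h3 | h3
      · exact absurd h3 (ne_of_gt hdgpos)
      · linarith
    have hk1j : k 1 = j := by
      apply cancel (d*r) _ _ hk2 hk3 hj0 hj1
      refine ⟨w1 - w.2, ?_⟩
      have e1' : v 1 - k 1 = d*(q*w0 + r*w.2) := by rw [← hww]; exact e1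
      linear_combination hjv - e1'
    rw [hk4, hk0i, hk1j]

private lemma lem_hQ (M : Matrix (Fin 2) (Fin 2) ℤ) (a b c d : ℤ) (hd : 1 ≤ d)
    (ha' : M 0 0 = 2*a) (hc' : M 1 1 = 2*c) (hbb : M 0 1 = b) (hb' : M 1 0 = b)
    (hdet : M.det = 4*a*c - b^2) (hDpos : 0 < M.det) :
    ∀ k : Fin 2 → ℤ, (1 / (2 * (d : ℚ))) *
        ((fun i => ((k i : ℚ))) ⬝ᵥ (M.map ((↑) : ℤ → ℚ))⁻¹.mulVec (fun i => ((k i : ℚ))))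
      = ((c*(k 0)^2 - b*(k 0)*(k 1) + a*(k 1)^2 : ℤ) : ℚ)/(d*M.det) := by
  have hDQ : ((M.det : ℚ)) = 4*a*c - b^2 := by exact_mod_cast congrArg (Int.cast : ℤ → ℚ) hdet
  have hDne : ((M.det : ℚ)) ≠ 0 := by
    have : (0:ℚ) < (M.det : ℚ) := by exact_mod_cast hDpos
    linarith
  have hdne : ((d : ℚ)) ≠ 0 := by
    have hd0 : (0:ℤ) < d := by omega
    have : (0:ℚ) < (d : ℚ) := by exact_mod_cast hd0
    exact ne_of_gt this
  set B : Matrix (Fin 2) (Fin 2) ℚ :=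
    (M.det : ℚ)⁻¹ • ![![(2*(c:ℚ)), -(b:ℚ)], ![-(b:ℚ), 2*(a:ℚ)]] with hB
  have hinv : (M.map ((↑) : ℤ → ℚ))⁻¹ = B := by
    apply Matrix.inv_eq_right_inv
    ext i j
    fin_cases i <;> fin_cases j <;>
      · simp only [Matrix.mul_apply]; simp [hB, Matrix.mul_apply, Fin.sum_univ_two, Matrix.map_apply, ha', hc', hbb, hb']
        field_simp
        first | linear_combination (-2:ℚ)*hDQ | linear_combination (-1:ℚ)*hDQ |
          linear_combination (-(M.det:ℚ))*hDQ | linear_combination ((M.det:ℚ))*hDQ | ring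
  intro k
  rw [hinv]
  simp only [hB, Matrix.mulVec, dotProduct, Fin.sum_univ_two, Matrix.smul_apply,
    Matrix.cons_val_zero, Matrix.cons_val_one, Matrix.head_cons, smul_eq_mul, Pi.smul_apply]
  push_cast [-Int.cast_det]
  field_simp
  ring

private lemma lem_bij (M : Matrix (Fin 2) (Fin 2) ℤ) (d : ℤ) (Q : (Fin 2 → ℤ) → ℚ)
    (K K₀ : Finset (Fin 2 → ℤ))
    (hQinv : ∀ v k : Fin 2 → ℤ, (∃ u, v - k = d • M.mulVec u) → ∃ m : ℤ, Q v = Q k + m)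
    (hK : ∀ v : Fin 2 → ℤ, ∃! k, k ∈ K ∧ ∃ u : Fin 2 → ℤ, v - k = d • M.mulVec u)
    (hK₀ : ∀ v : Fin 2 → ℤ, ∃! k, k ∈ K₀ ∧ ∃ u : Fin 2 → ℤ, v - k = d • M.mulVec u) :
    ∃ m : ℤ, ∑ k ∈ K, Q k = ∑ k ∈ K₀, Q k + m := by
  classical
  set Rel : (Fin 2 → ℤ) → (Fin 2 → ℤ) → Prop :=
    fun v k => ∃ u : Fin 2 → ℤ, v - k = d • M.mulVec u with hRel
  have hrefl : ∀ v, Rel v v := fun v => ⟨0, by simp⟩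
  have hsymm : ∀ v k, Rel v k → Rel k v := by
    rintro v k ⟨u, hu⟩
    exact ⟨-u, by rw [Matrix.mulVec_neg, smul_neg, ← hu]; ring⟩
  have htrans : ∀ v k z, Rel v k → Rel k z → Rel v z := by
    rintro v k z ⟨u, hu⟩ ⟨u', hu'⟩
    exact ⟨u + u', by rw [Matrix.mulVec_add, smul_add, ← hu, ← hu']; ring⟩
  set φ : (Fin 2 → ℤ) → (Fin 2 → ℤ) := fun v => (hK₀ v).choose with hφ
  have hφmem : ∀ v, φ v ∈ K₀ := fun v => (hK₀ v).choose_spec.1.1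
  have hφrel : ∀ v, Rel v (φ v) := fun v => (hK₀ v).choose_spec.1.2
  have hφuniq : ∀ v k, k ∈ K₀ → Rel v k → k = φ v := fun v k h1 h2 =>
    (hK₀ v).choose_spec.2 k ⟨h1, h2⟩
  set mf : (Fin 2 → ℤ) → ℤ := fun k => (hQinv k (φ k) (hφrel k)).choose with hmf
  have hmfspec : ∀ k, Q k = Q (φ k) + mf k := fun k => (hQinv k (φ k) (hφrel k)).choose_spec
  have step1 : ∑ k ∈ K, Q k = ∑ k ∈ K, (Q (φ k) + (mf k : ℚ)) :=
    Finset.sum_congr rfl (fun k _ => hmfspec k)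
  have step2 : ∑ k ∈ K, (Q (φ k) + (mf k : ℚ)) = ∑ k ∈ K, Q (φ k) + ∑ k ∈ K, (mf k : ℚ) :=
    Finset.sum_add_distrib
  have step3 : ∑ k ∈ K, Q (φ k) = ∑ k ∈ K₀, Q k := by
    apply Finset.sum_bij (fun k _ => φ k)
    · exact fun k _ => hφmem k
    · intro k1 h1 k2 h2 heq
      have ha : Rel k1 (φ k2) := by rw [← heq]; exact hφrel k1
      have r12 : Rel k1 k2 := htrans _ _ _ ha (hsymm _ _ (hφrel k2))
      obtain ⟨z, hz, hzuniq⟩ := hK k1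
      have e1 : k1 = z := hzuniq k1 ⟨h1, hrefl k1⟩
      have e2 : k2 = z := hzuniq k2 ⟨h2, r12⟩
      exact e1.trans e2.symm
    · intro k₀ hk₀
      obtain ⟨k, ⟨hkK, hkrel⟩, _⟩ := hK k₀
      refine ⟨k, hkK, ?_⟩
      exact (hφuniq k k₀ hk₀ (hsymm _ _ hkrel)).symm
    · exact fun k _ => rfl
  refine ⟨∑ k ∈ K, mf k, ?_⟩
  rw [step1, step2, step3]
  push_cast
  ring

private lemma lem_final (a b c g r d D : ℤ) (P R : ℕ)
    (hd : 1 ≤ d) (hgpos : 0 < g) (hrpos : 0 < r)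
    (hPc : (P : ℤ) = d*g) (hRc : (R : ℤ) = d*r)
    (hgr : D = g * r)
    (K₀ : Finset (Fin 2 → ℤ))
    (hK₀def : K₀ = (Finset.range P ×ˢ Finset.range R).image (fun p => ![(p.1 : ℤ), (p.2 : ℤ)]))
    (N : ℤ)
    (hN : N = 2*d*c*(d*g-1)*(2*d*g-1) + 2*d*a*(d*r-1)*(2*d*r-1) - 3*d*b*(d*g-1)*(d*r-1)
      - d^3*(2*c*(g-1)*(2*g-1) + 2*a*(r-1)*(2*r-1) - 3*b*(g-1)*(r-1) - 3*g*r) - 3*g*r*d)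
    (n₀ : ℤ) (hn₀ : N = 12*n₀) :
    ∑ k ∈ K₀, ((c*(k 0)^2 - b*(k 0)*(k 1) + a*(k 1)^2 : ℤ) : ℚ)/(d*D)
      - (((2*c*(g-1)*(2*g-1) + 2*a*(r-1)*(2*r-1) - 3*b*(g-1)*(r-1) - 3*(g*r) : ℤ) : ℚ)/12) * (d:ℚ)^3
      - ((D : ℚ)/4) * (d:ℚ) = (n₀ : ℚ) := by
  have hdne : ((d:ℚ)) ≠ 0 := by
    have : (0:ℤ) < d := by omega
    positivity
  have hgne : ((g:ℚ)) ≠ 0 := by positivity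
  have hrne : ((r:ℚ)) ≠ 0 := by positivity
  have hPQ : ((P:ℕ):ℚ) = (d:ℚ)*(g:ℚ) := by exact_mod_cast hPc
  have hRQ : ((R:ℕ):ℚ) = (d:ℚ)*(r:ℚ) := by exact_mod_cast hRc
  have hgrQ : ((D:ℚ)) = (g:ℚ)*(r:ℚ) := by exact_mod_cast hgr
  have hNQ : ((N:ℚ)) = 2*d*c*(d*g-1)*(2*d*g-1) + 2*d*a*(d*r-1)*(2*d*r-1) - 3*d*b*(d*g-1)*(d*r-1)
      - (d:ℚ)^3*(2*c*(g-1)*(2*g-1) + 2*a*(r-1)*(2*r-1) - 3*b*(g-1)*(r-1) - 3*g*r) - 3*g*r*d := by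
    rw [hN]; push_cast; ring
  have hinj : ∀ p ∈ Finset.range P ×ˢ Finset.range R, ∀ p' ∈ Finset.range P ×ˢ Finset.range R,
      (fun p : ℕ × ℕ => ![(p.1 : ℤ), (p.2 : ℤ)]) p = (fun p : ℕ × ℕ => ![(p.1 : ℤ), (p.2 : ℤ)]) p' → p = p' := by
    intro p _ p' _ h
    have h0 := congrFun h 0
    have h1 := congrFun h 1
    simp only [Matrix.cons_val_zero, Matrix.cons_val_one, Matrix.head_cons, Nat.cast_inj] at h0 h1
    exact Prod.ext h0 h1
  rw [hK₀def, Finset.sum_image hinj]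
  have hstep : ∀ p : ℕ × ℕ, ((c*((![(p.1 : ℤ), (p.2 : ℤ)]) 0)^2 - b*((![(p.1 : ℤ), (p.2 : ℤ)]) 0)*((![(p.1 : ℤ), (p.2 : ℤ)]) 1) + a*((![(p.1 : ℤ), (p.2 : ℤ)]) 1)^2 : ℤ) : ℚ)/(d*D)
      = ((c:ℚ)*(p.1:ℚ)^2 - (b:ℚ)*(p.1:ℚ)*(p.2:ℚ) + (a:ℚ)*(p.2:ℚ)^2)/((d:ℚ)*(D:ℚ)) := by
    intro p
    have e0 : (![(p.1 : ℤ), (p.2 : ℤ)]) 0 = (p.1 : ℤ) := rfl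
    have e1 : (![(p.1 : ℤ), (p.2 : ℤ)]) 1 = (p.2 : ℤ) := rfl
    rw [e0, e1]; push_cast; ring
  rw [Finset.sum_congr rfl (fun p _ => hstep p), Finset.sum_product]
  have hinner : ∀ i : ℕ, ∑ j ∈ Finset.range R, ((c:ℚ)*(i:ℚ)^2 - (b:ℚ)*(i:ℚ)*(j:ℚ) + (a:ℚ)*(j:ℚ)^2)/((d:ℚ)*(D:ℚ))
      = ((R:ℚ)*((c:ℚ)*(i:ℚ)^2) + (-(b:ℚ)*(i:ℚ))*((R:ℚ)*((R:ℚ)-1)/2) + (a:ℚ)*((R:ℚ)*((R:ℚ)-1)*(2*(R:ℚ)-1)/6))/((d:ℚ)*(D:ℚ)) := by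
    intro i
    rw [← Finset.sum_div]
    congr 1
    rw [← sum_quad R ((c:ℚ)*(i:ℚ)^2) (-(b:ℚ)*(i:ℚ)) (a:ℚ)]
    exact Finset.sum_congr rfl (fun j _ => by ring)
  rw [Finset.sum_congr rfl (fun i _ => hinner i)]
  have houter : ∑ i ∈ Finset.range P, ((R:ℚ)*((c:ℚ)*(i:ℚ)^2) + (-(b:ℚ)*(i:ℚ))*((R:ℚ)*((R:ℚ)-1)/2) + (a:ℚ)*((R:ℚ)*((R:ℚ)-1)*(2*(R:ℚ)-1)/6))/((d:ℚ)*(D:ℚ))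
      = ((P:ℚ)*((a:ℚ)*((R:ℚ)*((R:ℚ)-1)*(2*(R:ℚ)-1)/6)) + (-(b:ℚ)*((R:ℚ)*((R:ℚ)-1)/2))*((P:ℚ)*((P:ℚ)-1)/2) + ((R:ℚ)*(c:ℚ))*((P:ℚ)*((P:ℚ)-1)*(2*(P:ℚ)-1)/6))/((d:ℚ)*(D:ℚ)) := by
    rw [← Finset.sum_div]
    congr 1
    rw [← sum_quad P ((a:ℚ)*((R:ℚ)*((R:ℚ)-1)*(2*(R:ℚ)-1)/6)) (-(b:ℚ)*((R:ℚ)*((R:ℚ)-1)/2)) ((R:ℚ)*(c:ℚ))]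
    exact Finset.sum_congr rfl (fun i _ => by ring)
  rw [houter, hPQ, hRQ, hgrQ]
  have hfin : ((d:ℚ)*(g:ℚ)*((a:ℚ)*((d:ℚ)*(r:ℚ)*((d:ℚ)*(r:ℚ)-1)*(2*((d:ℚ)*(r:ℚ))-1)/6)) + (-(b:ℚ)*((d:ℚ)*(r:ℚ)*((d:ℚ)*(r:ℚ)-1)/2))*((d:ℚ)*(g:ℚ)*((d:ℚ)*(g:ℚ)-1)/2) + ((d:ℚ)*(r:ℚ)*(c:ℚ))*((d:ℚ)*(g:ℚ)*((d:ℚ)*(g:ℚ)-1)*(2*((d:ℚ)*(g:ℚ))-1)/6))/((d:ℚ)*((g:ℚ)*(r:ℚ)))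
      - (((2*c*(g-1)*(2*g-1) + 2*a*(r-1)*(2*r-1) - 3*b*(g-1)*(r-1) - 3*(g*r) : ℤ) : ℚ)/12) * (d:ℚ)^3
      - ((g:ℚ)*(r:ℚ)/4) * (d:ℚ) = ((N:ℚ))/12 := by
    rw [hNQ]
    push_cast
    field_simp
    ring
  rw [hfin, show ((N:ℚ)) = 12*(n₀:ℚ) from by exact_mod_cast hn₀]
  ring

theorem stmt15 (M : Matrix (Fin 2) (Fin 2) ℤ) (hMsymm : M.IsSymm)
    (hMpos : (M.map ((↑) : ℤ → ℝ)).PosDef)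
    (hMeven : ∀ i, Even (M i i)) :
    ∃ α' : ℚ, (∃ m : ℤ, 12 * α' = (m : ℚ)) ∧
      ∀ d : ℤ, 1 ≤ d → ∀ K : Finset (Fin 2 → ℤ),
        (∀ v : Fin 2 → ℤ, ∃! k, k ∈ K ∧ ∃ u : Fin 2 → ℤ, v - k = d • M.mulVec u) →
        ∃ n : ℤ,
          (∑ k ∈ K, (1 / (2 * (d : ℚ))) *
              ((fun i => ((k i : ℚ))) ⬝ᵥ
                (M.map ((↑) : ℤ → ℚ))⁻¹.mulVec (fun i => ((k i : ℚ)))))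
            - α' * (d : ℚ) ^ 3 - ((M.det : ℚ) / 4) * (d : ℚ) = (n : ℚ) := by
  classical
  obtain ⟨a, ha⟩ := hMeven 0
  obtain ⟨c, hc⟩ := hMeven 1
  set b := M 0 1 with hbdef
  have hbb : M 0 1 = b := rfl
  have hb' : M 1 0 = b := by
    conv_lhs => rw [← hMsymm]
    rfl
  have ha' : M 0 0 = 2*a := by rw [ha]; ring
  have hc' : M 1 1 = 2*c := by rw [hc]; ring
  have hdet : M.det = 4*a*c - b^2 := by
    rw [Matrix.det_fin_two, ha', hc', hb']; ring
  have hDpos : 0 < M.det := by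
    have h1 := hMpos.det_pos
    have h2 : (M.map ((↑) : ℤ → ℝ)).det = ((M.det : ℝ)) := by
      rw [Matrix.det_fin_two, Matrix.det_fin_two]
      simp [Matrix.map_apply]
    rw [h2] at h1
    exact_mod_cast h1
  have hapos : 0 < a := by
    have h2 := (Matrix.posDef_iff_dotProduct_mulVec.mp hMpos).2 (x := fun i => if i = 0 then 1 else 0) (by
      intro h; have := congrFun h 0; simp at this)
    simp only [dotProduct, Matrix.mulVec, Fin.sum_univ_two] at h2
    norm_num [Matrix.map_apply, ha'] at h2
    exact h2
  set g : ℤ := (Int.gcd (2*a) b : ℤ) with hg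
  have hgpos : 0 < g := by
    have h2a : 2*a ≠ 0 := by omega
    simp only [hg]
    exact_mod_cast Nat.pos_of_ne_zero (fun h => h2a (Int.gcd_eq_zero_iff.mp h).1)
  obtain ⟨a', ha2⟩ : g ∣ 2*a := Int.gcd_dvd_left _ _
  obtain ⟨b', hb2⟩ : g ∣ b := Int.gcd_dvd_right _ _
  set x := Int.gcdA (2*a) b with hx
  set y := Int.gcdB (2*a) b with hy
  have hBez : g = 2*a*x + b*y := Int.gcd_eq_gcd_ab (2*a) b
  have hgD : g ∣ M.det := by
    rw [hdet]
    have he : (4*a*c - b^2) = (2*a)*(2*c) - b*b := by ring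
    rw [he]
    exact dvd_sub (Dvd.dvd.mul_right (Int.gcd_dvd_left _ _) _) (Dvd.dvd.mul_right (Int.gcd_dvd_right _ _) b)
  obtain ⟨r, hr⟩ := hgD
  have hrpos : 0 < r := by nlinarith [hr, hDpos, hgpos]
  set q := b*x + 2*c*y with hq
  have hgne : g ≠ 0 := ne_of_gt hgpos
  have hDe : g * r = 4*a*c - b^2 := by rw [← hr, hdet]
  have key1 : q*a' - r*y = b := by
    apply mul_left_cancel₀ hgne
    linear_combination (-q)*ha2 + (-y)*hDe + (-b)*hBez + (2*a)*hq
  have key2 : q*b' + r*x = 2*c := by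
    apply mul_left_cancel₀ hgne
    linear_combination (-q)*hb2 + x*hDe + b*hq + (-2*c)*hBez
  have key3 : 2*c*a' - b*b' = r := by
    apply mul_left_cancel₀ hgne
    linear_combination (-2*c)*ha2 + b*hb2 + (-1)*hDe
  refine ⟨((2*c*(g-1)*(2*g-1) + 2*a*(r-1)*(2*r-1) - 3*b*(g-1)*(r-1) - 3*(g*r) : ℤ) : ℚ)/12,
    ⟨(2*c*(g-1)*(2*g-1) + 2*a*(r-1)*(2*r-1) - 3*b*(g-1)*(r-1) - 3*(g*r) : ℤ), by field_simp⟩, ?_⟩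
  intro d hd K hK
  -- the lattice equivalence
  have hMH := lem_hMH M a b c g r q a' b' x y d ha' hc' hbb hb' ha2 hb2 hBez hq key1 key2 key3
  -- the box representative set
  set P : ℕ := (d*g).toNat with hP
  set R : ℕ := (d*r).toNat with hR
  have hdgpos : 0 < d*g := by positivity
  have hdrpos : 0 < d*r := by positivity
  have hPc : (P : ℤ) = d*g := Int.toNat_of_nonneg hdgpos.le
  have hRc : (R : ℤ) = d*r := Int.toNat_of_nonneg hdrpos.le
  set K₀ : Finset (Fin 2 → ℤ) :=
    (Finset.range P ×ˢ Finset.range R).image (fun p => ![(p.1 : ℤ), (p.2 : ℤ)]) with hK₀def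
  have hK₀ := lem_hK0 M g r q d hgpos hrpos hd hMH
  -- the quadratic form formula
  have hQ := lem_hQ M a b c d hd ha' hc' hbb hb' hdet hDpos
  -- invariance of Q on cosets
  set fQ : (Fin 2 → ℤ) → ℚ :=
    fun k => ((c*(k 0)^2 - b*(k 0)*(k 1) + a*(k 1)^2 : ℤ) : ℚ)/(d*M.det) with hfQ
  have hdne : ((d:ℚ)) ≠ 0 := by
    have : (0:ℤ) < d := by omega
    positivity
  have hDne : ((M.det : ℚ)) ≠ 0 := by
    have : (0:ℚ) < (M.det : ℚ) := by exact_mod_cast hDpos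
    linarith
  have hQinv : ∀ v k : Fin 2 → ℤ, (∃ u, v - k = d • M.mulVec u) → ∃ m : ℤ, fQ v = fQ k + m := by
    rintro v k ⟨u, hu⟩
    have hmv : ∀ i, (d • M.mulVec u) i = d * (M i 0 * u 0 + M i 1 * u 1) := by
      intro i
      simp only [Pi.smul_apply, Matrix.mulVec, dotProduct, Fin.sum_univ_two, smul_eq_mul]
    have h0 := congrFun hu 0
    have h1 := congrFun hu 1
    rw [hmv, ha', hbb] at h0
    rw [hmv, hb', hc'] at h1
    simp only [Pi.sub_apply] at h0 h1
    have hv0 : v 0 = k 0 + d*(2*a*u 0 + b*u 1) := by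
      have : v 0 - k 0 = d * (2*a*u 0 + b*u 1) := by linear_combination h0
      linarith
    have hv1 : v 1 = k 1 + d*(b*u 0 + 2*c*u 1) := by
      have : v 1 - k 1 = d * (b*u 0 + 2*c*u 1) := by linear_combination h1
      linarith
    refine ⟨k 0*u 0 + k 1*u 1 + d*(a*(u 0)^2 + b*(u 0)*(u 1) + c*(u 1)^2), ?_⟩
    simp only [hfQ]
    have hZ : c*(v 0)^2 - b*(v 0)*(v 1) + a*(v 1)^2
        = (c*(k 0)^2 - b*(k 0)*(k 1) + a*(k 1)^2)
          + d*M.det*(k 0*u 0 + k 1*u 1 + d*(a*(u 0)^2 + b*(u 0)*(u 1) + c*(u 1)^2)) := by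
      rw [hv0, hv1, hdet]; ring
    rw [show (c*(v 0)^2 - b*(v 0)*(v 1) + a*(v 1)^2 : ℤ)
        = (c*(k 0)^2 - b*(k 0)*(k 1) + a*(k 1)^2)
          + d*M.det*(k 0*u 0 + k 1*u 1 + d*(a*(u 0)^2 + b*(u 0)*(u 1) + c*(u 1)^2)) from hZ]
    push_cast [-Int.cast_det]
    field_simp
  -- the sums agree up to an integer
  obtain ⟨m, hm⟩ := lem_bij M d fQ K K₀ hQinv hK hK₀
  -- divisibility
  set N : ℤ := 2*d*c*(d*g-1)*(2*d*g-1) + 2*d*a*(d*r-1)*(2*d*r-1) - 3*d*b*(d*g-1)*(d*r-1)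
      - d^3*(2*c*(g-1)*(2*g-1) + 2*a*(r-1)*(2*r-1) - 3*b*(g-1)*(r-1) - 3*g*r) - 3*g*r*d with hN
  have h3 : ((3:ℕ):ℤ) ∣ N := by
    rw [← ZMod.intCast_zmod_eq_zero_iff_dvd]
    have hcast : ((g:ZMod 3))*((r:ZMod 3)) = 4*((a:ZMod 3))*((c:ZMod 3)) - ((b:ZMod 3))^2 := by
      have := congrArg (Int.cast : ℤ → ZMod 3) hDe
      push_cast at this
      exact this
    have := aux_mod3 (a : ZMod 3) (b : ZMod 3) (c : ZMod 3) (g : ZMod 3) (r : ZMod 3) (d : ZMod 3) hcast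
    rw [hN]
    push_cast
    linear_combination this
  have h4 : ((4:ℕ):ℤ) ∣ N := by
    rw [← ZMod.intCast_zmod_eq_zero_iff_dvd]
    have hcast : ((g:ZMod 4))*((r:ZMod 4)) = 4*((a:ZMod 4))*((c:ZMod 4)) - ((b:ZMod 4))^2 := by
      have := congrArg (Int.cast : ℤ → ZMod 4) hDe
      push_cast at this
      exact this
    have := aux_mod4 (a : ZMod 4) (b : ZMod 4) (c : ZMod 4) (g : ZMod 4) (r : ZMod 4) (d : ZMod 4) hcast
    rw [hN]
    push_cast
    linear_combination this
  have h12 : (12:ℤ) ∣ N := by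
    have hco : IsCoprime (3:ℤ) 4 := by
      rw [Int.isCoprime_iff_gcd_eq_one]
      decide
    have := hco.mul_dvd (by exact_mod_cast h3) (by exact_mod_cast h4)
    exact_mod_cast this
  obtain ⟨n₀, hn₀⟩ := h12
  -- final computation
  have hfinal := lem_final a b c g r d M.det P R hd hgpos hrpos hPc hRc hr K₀ hK₀def N hN n₀ hn₀
  refine ⟨n₀ + m, ?_⟩
  rw [Finset.sum_congr rfl (fun k _ => hQ k)]
  have : ∑ k ∈ K, fQ k = ∑ k ∈ K₀, fQ k + m := hm
  simp only [hfQ] at this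
  rw [this, Int.cast_add]
  linear_combination hfinal
end
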